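/- Let I be an ideal of ℂ[x] with A = ℂ[x]/I Artinian and V(I) = {ξ₁,…,ξ_{r'}}. For any g ∈ ℂ[x], the eigenvalues of the multiplication operator M_g : A → A, h ↦ gh, are exactly the values g(ξ₁),…,g(ξ_{r'}), with the eigenvalue g(ξ_i) occurring with algebraic multiplicity μ_i = dim A_i, where A_i = ℂ[x]/Q_i and Q_i is the primary component of I at ξ_i. -/

import Mathlib

set_option maxHeartbeats 4000000
set_option synthInstance.maxHeartbeats 400000

/-- Eigenvalues of the multiplication operator `M_g` on `A = ℂ[x]/I` for an
Artinian quotient with roots `V(I) = {ξ₁,…,ξ_{r'}}`: they are the values `g(ξᵢ)`,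
with algebraic multiplicity `dim ℂ[x]/Qᵢ` where `Qᵢ` is the primary component of
`I` at `ξᵢ` (when the values `g(ξᵢ)` are distinct). -/
theorem stmt8 (n r' : ℕ) (I : Ideal (MvPolynomial (Fin n) ℂ))
    [Module.Finite ℂ (MvPolynomial (Fin n) ℂ ⧸ I)]
    (ξ : Fin r' → (Fin n → ℂ)) (hξ : Function.Injective ξ)
    (hV : {x : Fin n → ℂ | ∀ p ∈ I, MvPolynomial.eval x p = 0} = Set.range ξ)
    (Q : Fin r' → Ideal (MvPolynomial (Fin n) ℂ))
    (hQ : ∀ i, (Q i).IsPrimary)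
    (hQrad : ∀ i, (Q i).radical = RingHom.ker (MvPolynomial.eval (ξ i)))
    (hI : I = ⨅ i, Q i)
    (g : MvPolynomial (Fin n) ℂ) :
    (∀ μ : ℂ,
        Module.End.HasEigenvalue
          (LinearMap.mulLeft ℂ (Ideal.Quotient.mk I g)) μ ↔
        ∃ i, μ = MvPolynomial.eval (ξ i) g) ∧
    ((Function.Injective fun i => MvPolynomial.eval (ξ i) g) →
      ∀ i, Module.finrank ℂ
          ↥(Module.End.maxGenEigenspace
              (LinearMap.mulLeft ℂ (Ideal.Quotient.mk I g))
              (MvPolynomial.eval (ξ i) g)) =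
        Module.finrank ℂ (MvPolynomial (Fin n) ℂ ⧸ Q i)) := by
  classical
  have hIle : ∀ i, I ≤ Q i := fun i => hI ▸ iInf_le Q i
  have hIker : ∀ i, I ≤ RingHom.ker (MvPolynomial.eval (ξ i)) := fun i =>
    (hIle i).trans (Ideal.le_radical.trans (hQrad i).le)
  -- key operator identity
  have key : ∀ μ : ℂ,
      LinearMap.mulLeft ℂ (Ideal.Quotient.mk I g)
          - μ • (1 : Module.End ℂ (MvPolynomial (Fin n) ℂ ⧸ I))
        = LinearMap.mulLeft ℂ (Ideal.Quotient.mk I (g - MvPolynomial.C μ)) := by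
    intro μ
    ext v
    obtain ⟨q, rfl⟩ := Ideal.Quotient.mk_surjective v
    simp only [LinearMap.sub_apply, LinearMap.mulLeft_apply, LinearMap.smul_apply,
      Module.End.one_apply]
    rw [← Ideal.Quotient.mkₐ_eq_mk (R₁ := ℂ), ← map_smul, ← map_mul, ← map_mul, ← map_sub]
    congr 1
    rw [MvPolynomial.smul_eq_C_mul]
    ring
  have keyk : ∀ (μ : ℂ) (k : ℕ),
      (LinearMap.mulLeft ℂ (Ideal.Quotient.mk I g)
          - μ • (1 : Module.End ℂ (MvPolynomial (Fin n) ℂ ⧸ I))) ^ k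
        = LinearMap.mulLeft ℂ (Ideal.Quotient.mk I ((g - MvPolynomial.C μ) ^ k)) := by
    intro μ k
    rw [key, LinearMap.pow_mulLeft, map_pow]
  constructor
  · intro μ
    constructor
    · -- eigenvalue implies a value of g at some root
      intro hμ
      by_contra hcon
      push_neg at hcon
      obtain ⟨v, hv⟩ := hμ.exists_hasEigenvector
      obtain ⟨p, rfl⟩ := Ideal.Quotient.mk_surjective v
      have h2 := Module.End.mem_eigenspace_iff.mp hv.1
      have h3 : (LinearMap.mulLeft ℂ (Ideal.Quotient.mk I g)
          - μ • (1 : Module.End ℂ (MvPolynomial (Fin n) ℂ ⧸ I))) (Ideal.Quotient.mk I p) = 0 := by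
        simp only [LinearMap.sub_apply, LinearMap.smul_apply, Module.End.one_apply, h2, sub_self]
      rw [key] at h3
      simp only [LinearMap.mulLeft_apply] at h3
      have hmem : (g - MvPolynomial.C μ) * p ∈ I := by
        rwa [← map_mul, Ideal.Quotient.eq_zero_iff_mem] at h3
      have hpI : p ∈ I := by
        rw [hI, Ideal.mem_iInf]
        intro j
        have hj : p * (g - MvPolynomial.C μ) ∈ Q j := by
          rw [mul_comm p (g - MvPolynomial.C μ)]; exact hIle j hmem
        rcases (Ideal.isPrimary_iff.mp (hQ j)).2 hj with hp | hy
        · exact hp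
        · exfalso
          rw [hQrad j, RingHom.mem_ker, map_sub, MvPolynomial.eval_C, sub_eq_zero] at hy
          exact hcon j hy.symm
      exact hv.2 (Ideal.Quotient.eq_zero_iff_mem.mpr hpI)
    · -- each value of g at a root is an eigenvalue
      rintro ⟨i, rfl⟩
      rw [Module.End.hasEigenvalue_iff]
      intro hbot
      have hinj : Function.Injective
          (LinearMap.mulLeft ℂ
            (Ideal.Quotient.mk I (g - MvPolynomial.C (MvPolynomial.eval (ξ i) g)))) := by
        rw [← LinearMap.ker_eq_bot, ← key, ← Module.End.eigenspace_def]
        exact hbot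
      have hsurj := LinearMap.surjective_of_injective hinj
      obtain ⟨b, hb⟩ := hsurj 1
      simp only [LinearMap.mulLeft_apply] at hb
      set χ : (MvPolynomial (Fin n) ℂ ⧸ I) →+* ℂ :=
        Ideal.Quotient.lift I (MvPolynomial.eval (ξ i)) (fun a ha => RingHom.mem_ker.mp (hIker i ha)) with hχ
      have h1 : χ (Ideal.Quotient.mk I (g - MvPolynomial.C (MvPolynomial.eval (ξ i) g)) * b)
          = 1 := by rw [hb]; exact map_one χ
      rw [map_mul] at h1
      have h0 : χ (Ideal.Quotient.mk I (g - MvPolynomial.C (MvPolynomial.eval (ξ i) g))) = 0 := by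
        rw [hχ, Ideal.Quotient.lift_mk, map_sub, MvPolynomial.eval_C, sub_self]
      rw [h0, zero_mul] at h1
      exact zero_ne_one h1
  · -- multiplicities
    intro hg i
    set lam : ℂ := MvPolynomial.eval (ξ i) g with hlam
    set Qc : Ideal (MvPolynomial (Fin n) ℂ) := ⨅ j ∈ Finset.univ.erase i, Q j with hQc
    have hQc_mem : ∀ p : MvPolynomial (Fin n) ℂ, p ∈ Qc ↔ ∀ j, j ≠ i → p ∈ Q j := by
      intro p
      simp [hQc, Ideal.mem_iInf]
    have hker_max : ∀ j, (RingHom.ker (MvPolynomial.eval (R := ℂ) (ξ j))).IsMaximal :=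
      fun j => RingHom.ker_isMaximal_of_surjective _
        (fun c => ⟨MvPolynomial.C c, MvPolynomial.eval_C _⟩)
    have hcop : IsCoprime (Q i) Qc := by
      refine Ideal.isCoprime_biInf fun j hj => ?_
      rw [Ideal.isCoprime_iff_sup_eq]
      by_contra hne
      obtain ⟨M, hM, hle⟩ := Ideal.exists_le_maximal _ hne
      have hMi : RingHom.ker (MvPolynomial.eval (R := ℂ) (ξ i)) ≤ M := by
        rw [← hQrad i]
        calc (Q i).radical ≤ M.radical :=
              Ideal.radical_mono (le_trans le_sup_left hle)
          _ = M := hM.isPrime.radical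
      have hMj : RingHom.ker (MvPolynomial.eval (R := ℂ) (ξ j)) ≤ M := by
        rw [← hQrad j]
        calc (Q j).radical ≤ M.radical :=
              Ideal.radical_mono (le_trans le_sup_right hle)
          _ = M := hM.isPrime.radical
      have hi' : RingHom.ker (MvPolynomial.eval (R := ℂ) (ξ i)) = M :=
        (hker_max i).eq_of_le hM.ne_top hMi
      have hj' : RingHom.ker (MvPolynomial.eval (R := ℂ) (ξ j)) = M :=
        (hker_max j).eq_of_le hM.ne_top hMj
      have hxy : ξ j = ξ i := by
        funext k
        have hmem : (MvPolynomial.X k - MvPolynomial.C (ξ i k) : MvPolynomial (Fin n) ℂ)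
            ∈ RingHom.ker (MvPolynomial.eval (R := ℂ) (ξ i)) := by
          rw [RingHom.mem_ker, map_sub, MvPolynomial.eval_X, MvPolynomial.eval_C, sub_self]
        rw [hi', ← hj', RingHom.mem_ker, map_sub, MvPolynomial.eval_X,
          MvPolynomial.eval_C, sub_eq_zero] at hmem
        exact hmem
      exact (Finset.mem_erase.mp hj).1 (hξ hxy)
    have hsup : Q i ⊔ Qc = ⊤ := hcop.sup_eq
    -- the generalized eigenspace equals the image of Qc
    have hET : Module.End.maxGenEigenspace (LinearMap.mulLeft ℂ (Ideal.Quotient.mk I g)) lam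
        = (Ideal.map (Ideal.Quotient.mk I) Qc).restrictScalars ℂ := by
      ext v
      rw [Module.End.mem_maxGenEigenspace]
      constructor
      · rintro ⟨k, hk⟩
        rw [keyk] at hk
        obtain ⟨p, rfl⟩ := Ideal.Quotient.mk_surjective v
        simp only [LinearMap.mulLeft_apply] at hk
        have hmem : (g - MvPolynomial.C lam) ^ k * p ∈ I := by
          rwa [← map_mul, Ideal.Quotient.eq_zero_iff_mem] at hk
        have hpQc : p ∈ Qc := by
          rw [hQc_mem]
          intro j hji
          have hj : p * (g - MvPolynomial.C lam) ^ k ∈ Q j := by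
            rw [mul_comm p ((g - MvPolynomial.C lam) ^ k)]; exact hIle j hmem
          rcases (Ideal.isPrimary_iff.mp (hQ j)).2 hj with hp | hy
          · exact hp
          · exfalso
            have hy' : g - MvPolynomial.C lam ∈ (Q j).radical :=
              (Ideal.isPrime_radical (hQ j)).mem_of_pow_mem k hy
            rw [hQrad j, RingHom.mem_ker, map_sub, MvPolynomial.eval_C, sub_eq_zero] at hy'
            exact hji (hg hy')
        exact Ideal.mem_map_of_mem (Ideal.Quotient.mk I) hpQc
      · intro hv
        obtain ⟨p, hp, rfl⟩ :=
          (Ideal.mem_map_iff_of_surjective (Ideal.Quotient.mk I)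
            Ideal.Quotient.mk_surjective).mp hv
        have hrad : g - MvPolynomial.C lam ∈ (Q i).radical := by
          rw [hQrad i, RingHom.mem_ker, map_sub, MvPolynomial.eval_C, sub_self]
        obtain ⟨k, hk⟩ := Ideal.mem_radical_iff.mp hrad
        refine ⟨k, ?_⟩
        rw [keyk]
        simp only [LinearMap.mulLeft_apply]
        rw [← map_mul, Ideal.Quotient.eq_zero_iff_mem, hI, Ideal.mem_iInf]
        intro j
        by_cases hji : j = i
        · subst hji
          exact Ideal.mul_mem_right _ _ hk
        · exact Ideal.mul_mem_left _ _ ((hQc_mem p).mp hp j hji)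
    rw [hET]
    -- the image of Qc is linearly isomorphic to ℂ[x] ⧸ Q i
    set ψ : (MvPolynomial (Fin n) ℂ ⧸ I) →ₐ[ℂ] MvPolynomial (Fin n) ℂ ⧸ Q i :=
      Ideal.Quotient.liftₐ I (Ideal.Quotient.mkₐ ℂ (Q i)) (fun a ha => by
        show Ideal.Quotient.mk (Q i) a = 0
        exact Ideal.Quotient.eq_zero_iff_mem.mpr (hIle i ha)) with hψdef
    have hψ : ∀ p : MvPolynomial (Fin n) ℂ,
        ψ (Ideal.Quotient.mk I p) = Ideal.Quotient.mk (Q i) p := by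
      intro p
      rw [hψdef]
      rfl
    set φ : ((Ideal.map (Ideal.Quotient.mk I) Qc).restrictScalars ℂ)
        →ₗ[ℂ] MvPolynomial (Fin n) ℂ ⧸ Q i :=
      ψ.toLinearMap.comp (Submodule.subtype _) with hφdef
    have hinj : Function.Injective φ := by
      rw [injective_iff_map_eq_zero]
      rintro ⟨x, hx⟩ h0
      obtain ⟨p, hp, hpx⟩ :=
        (Ideal.mem_map_iff_of_surjective (Ideal.Quotient.mk I)
          Ideal.Quotient.mk_surjective).mp hx
      have h1 : ψ x = 0 := h0
      rw [← hpx, hψ p, Ideal.Quotient.eq_zero_iff_mem] at h1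
      have hpI : p ∈ I := by
        rw [hI, Ideal.mem_iInf]
        intro j
        by_cases hji : j = i
        · subst hji; exact h1
        · exact (hQc_mem p).mp hp j hji
      have hx0 : x = 0 := by rw [← hpx]; exact Ideal.Quotient.eq_zero_iff_mem.mpr hpI
      exact Subtype.ext hx0
    have hsurj : Function.Surjective φ := by
      intro y
      obtain ⟨q, rfl⟩ := Ideal.Quotient.mk_surjective y
      have hone : (1 : MvPolynomial (Fin n) ℂ) ∈ Q i ⊔ Qc := by
        rw [hsup]; exact Submodule.mem_top
      obtain ⟨a, ha, b, hb, hab⟩ := Submodule.mem_sup.mp hone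
      refine ⟨⟨Ideal.Quotient.mk I (q * b),
        Ideal.mem_map_of_mem (Ideal.Quotient.mk I) (Ideal.mul_mem_left _ _ hb)⟩, ?_⟩
      have hφval : φ ⟨Ideal.Quotient.mk I (q * b),
          Ideal.mem_map_of_mem (Ideal.Quotient.mk I) (Ideal.mul_mem_left _ _ hb)⟩
          = Ideal.Quotient.mk (Q i) (q * b) := hψ (q * b)
      rw [hφval]
      have hb1 : Ideal.Quotient.mk (Q i) b = 1 := by
        have hba : (1 : MvPolynomial (Fin n) ℂ) - b ∈ Q i := by
          have h1b : (1 : MvPolynomial (Fin n) ℂ) - b = a := by rw [← hab]; ring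
          rw [h1b]; exact ha
        have := Ideal.Quotient.eq_zero_iff_mem.mpr hba
        rw [map_sub, map_one, sub_eq_zero] at this
        exact this.symm
      rw [map_mul, hb1, mul_one]
    exact LinearEquiv.finrank_eq (LinearEquiv.ofBijective φ ⟨hinj, hsurj⟩)
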